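/- Let A and B be lattices with zero and C a sub-tensor product of A and B. Let γ be a congruence of the lattice C and b ≤ b′ in B. Then the binary relation α on A defined by a₀ α a₁ ⟺ ((a₀ ∨ a₁) ⊗ b) ∨ ((a₀ ∧ a₁) ⊗ b′) ≡_γ (a₀ ∨ a₁) ⊗ b′ (in C) is a lattice congruence of A. -/
import Mathlib


variable {A B : Type*} [SemilatticeSup A] [OrderBot A] [SemilatticeSup B] [OrderBot B]

/-- A bi-ideal of `A × B`: a downward closed subset containing
`∇ = (A × {0}) ∪ ({0} × B)` that is closed under lateral joins. -/
def IsBiIdeal (I : Set (A × B)) : Prop :=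
  (∀ ⦃p q : A × B⦄, q ≤ p → p ∈ I → q ∈ I) ∧
  (∀ a : A, (a, (⊥ : B)) ∈ I) ∧
  (∀ b : B, ((⊥ : A), b) ∈ I) ∧
  (∀ a₀ a₁ : A, ∀ b : B, (a₀, b) ∈ I → (a₁, b) ∈ I → (a₀ ⊔ a₁, b) ∈ I) ∧
  (∀ a : A, ∀ b₀ b₁ : B, (a, b₀) ∈ I → (a, b₁) ∈ I → (a, b₀ ⊔ b₁) ∈ I)

/-- `∇ = (A × {0}) ∪ ({0} × B)`, the least bi-ideal. -/
def nabla (A B : Type*) [SemilatticeSup A] [OrderBot A] [SemilatticeSup B] [OrderBot B] :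
    Set (A × B) := {p | p.1 = ⊥ ∨ p.2 = ⊥}

/-- The pure tensor `a ⊗ b`. -/
def pureTensor (a : A) (b : B) : Set (A × B) :=
  nabla A B ∪ {p | p.1 ≤ a ∧ p.2 ≤ b}

/-- The bi-ideal generated by a subset `X` of `A × B`. -/
def biGen (X : Set (A × B)) : Set (A × B) := ⋂₀ {K | IsBiIdeal K ∧ X ⊆ K}

/-- The join of two bi-ideals in the lattice of bi-ideals. -/
def biSup (I J : Set (A × B)) : Set (A × B) := biGen (I ∪ J)

/-- Elements of the tensor product `A ⊗ B`: the compact (finitely generated) bi-ideals. -/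
def IsTensorElt (I : Set (A × B)) : Prop := ∃ S : Finset (A × B), I = biGen ↑S

/-- A sub-tensor product of `A` and `B`: a set of elements of `A ⊗ B` containing
all pure and mixed tensors, closed under finite intersection, and forming a
lattice under containment. -/
def IsSubTensorProduct (C : Set (Set (A × B))) : Prop :=
  (∀ I ∈ C, IsTensorElt I) ∧
  (∀ a : A, ∀ b : B, pureTensor a b ∈ C) ∧
  (∀ a₀ a₁ : A, ∀ b₀ b₁ : B, ((a₀ ≤ a₁ ∧ b₁ ≤ b₀) ∨ (a₁ ≤ a₀ ∧ b₀ ≤ b₁)) →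
    biSup (pureTensor a₀ b₀) (pureTensor a₁ b₁) ∈ C) ∧
  (∀ I ∈ C, ∀ J ∈ C, I ∩ J ∈ C) ∧
  (∀ I ∈ C, ∀ J ∈ C, ∃ K ∈ C, I ⊆ K ∧ J ⊆ K ∧ ∀ L ∈ C, I ⊆ L → J ⊆ L → K ⊆ L)

/-- The join of `I` and `J` in the lattice `C` (least upper bound in `C`). -/
def joinC (C : Set (Set (A × B))) (I J : Set (A × B)) : Set (A × B) :=
  ⋂₀ {K | K ∈ C ∧ I ⊆ K ∧ J ⊆ K}

/-- A congruence of the lattice `C` (ordered by containment, with meet given by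
intersection and join given by `joinC`). -/
def IsCongOn (C : Set (Set (A × B))) (γ : Set (A × B) → Set (A × B) → Prop) : Prop :=
  (∀ I ∈ C, γ I I) ∧
  (∀ I ∈ C, ∀ J ∈ C, γ I J → γ J I) ∧
  (∀ I ∈ C, ∀ J ∈ C, ∀ K ∈ C, γ I J → γ J K → γ I K) ∧
  (∀ I ∈ C, ∀ I' ∈ C, ∀ J ∈ C, ∀ J' ∈ C, γ I I' → γ J J' →
    γ (I ∩ J) (I' ∩ J') ∧ γ (joinC C I J) (joinC C I' J'))

/-- The principal congruence `Θ_C(U, V)` of the lattice `C`. -/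
def princCongOn (C : Set (Set (A × B))) (U V : Set (A × B))
    (H K : Set (A × B)) : Prop :=
  ∀ γ : Set (A × B) → Set (A × B) → Prop, IsCongOn C γ → γ U V → γ H K

/-- The congruence `α □ β` on bi-ideals. -/
def boxCong (α : A → A → Prop) (β : B → B → Prop)
    (H K : Set (A × B)) : Prop :=
  (∀ p ∈ H, ∃ q ∈ K, α p.1 q.1 ∧ β p.2 q.2) ∧
  (∀ q ∈ K, ∃ p ∈ H, α q.1 p.1 ∧ β q.2 p.2)

/-- A lattice congruence on a lattice `L`. -/
def IsLatCong {L : Type*} [Lattice L] (α : L → L → Prop) : Prop :=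
  Equivalence α ∧
  ∀ x x' y y' : L, α x x' → α y y' → α (x ⊔ y) (x' ⊔ y') ∧ α (x ⊓ y) (x' ⊓ y')

/-- The principal lattice congruence `Θ(u, v)` on a lattice `L`. -/
def princCong {L : Type*} [Lattice L] (u v : L) (x y : L) : Prop :=
  ∀ α : L → L → Prop, IsLatCong α → α u v → α x y


section AuxLemmas

variable {X Y : Type*} [Lattice X] [OrderBot X] [Lattice Y] [OrderBot Y]
variable {C : Set (Set (X × Y))}

lemma mem_pureTensor_iff {a : X} {c : Y} {p : X × Y} :
    p ∈ pureTensor a c ↔ (p.1 = ⊥ ∨ p.2 = ⊥) ∨ (p.1 ≤ a ∧ p.2 ≤ c) := Iff.rfl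

lemma self_mem_pureTensor (a : X) (c : Y) : (a, c) ∈ pureTensor a c :=
  Or.inr ⟨le_rfl, le_rfl⟩

lemma pureTensor_mono {a a' : X} {c c' : Y} (ha : a ≤ a') (hc : c ≤ c') :
    pureTensor a c ⊆ pureTensor a' c' := by
  rintro p (h | ⟨h1, h2⟩)
  · exact Or.inl h
  · exact Or.inr ⟨h1.trans ha, h2.trans hc⟩

lemma isBiIdeal_pureTensor (a : X) (c : Y) : IsBiIdeal (pureTensor a c) := by
  refine ⟨?_, fun x => Or.inl (Or.inr rfl), fun y => Or.inl (Or.inl rfl), ?_, ?_⟩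
  · rintro p q hqp ((h | h) | ⟨h1, h2⟩)
    · exact Or.inl (Or.inl (le_bot_iff.1 (hqp.1.trans_eq h)))
    · exact Or.inl (Or.inr (le_bot_iff.1 (hqp.2.trans_eq h)))
    · exact Or.inr ⟨hqp.1.trans h1, hqp.2.trans h2⟩
  · rintro x₀ x₁ c' h0 h1
    simp only [mem_pureTensor_iff] at h0 h1 ⊢
    rcases h0 with (h | h) | ⟨hx0, hc0⟩
    · subst h; simpa using h1
    · exact Or.inl (Or.inr h)
    · rcases h1 with (h | h) | ⟨hx1, hc1⟩
      · subst h; exact Or.inr ⟨by simpa using hx0, hc0⟩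
      · exact Or.inl (Or.inr h)
      · exact Or.inr ⟨sup_le hx0 hx1, hc0⟩
  · rintro x c₀ c₁ h0 h1
    simp only [mem_pureTensor_iff] at h0 h1 ⊢
    rcases h0 with (h | h) | ⟨hx0, hc0⟩
    · exact Or.inl (Or.inl h)
    · subst h; simpa using h1
    · rcases h1 with (h | h) | ⟨hx1, hc1⟩
      · exact Or.inl (Or.inl h)
      · subst h; exact Or.inr ⟨hx0, by simpa using hc0⟩
      · exact Or.inr ⟨hx0, sup_le hc0 hc1⟩

lemma isBiIdeal_biGen (S : Set (X × Y)) : IsBiIdeal (biGen S) := by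
  refine ⟨fun p q hqp hp => ?_, fun a => ?_, fun c => ?_, fun a₀ a₁ c h0 h1 => ?_,
    fun a c₀ c₁ h0 h1 => ?_⟩ <;> intro K hK
  · exact hK.1.1 hqp (hp K hK)
  · exact hK.1.2.1 a
  · exact hK.1.2.2.1 c
  · exact hK.1.2.2.2.1 _ _ _ (h0 K hK) (h1 K hK)
  · exact hK.1.2.2.2.2 _ _ _ (h0 K hK) (h1 K hK)

lemma biGen_of_isBiIdeal {I : Set (X × Y)} (hI : IsBiIdeal I) : biGen I = I :=
  subset_antisymm (Set.sInter_subset_of_mem ⟨hI, subset_rfl⟩)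
    (Set.subset_sInter fun _ hK => hK.2)

lemma isBiIdeal_of_mem (hC : IsSubTensorProduct C) {I : Set (X × Y)} (hI : I ∈ C) :
    IsBiIdeal I := by
  obtain ⟨S, rfl⟩ := hC.1 I hI
  exact isBiIdeal_biGen _

lemma pureTensor_subset {L : Set (X × Y)} (hL : IsBiIdeal L) {a : X} {c : Y}
    (h : (a, c) ∈ L) : pureTensor a c ⊆ L := by
  rintro p ((h1 | h1) | ⟨h1, h2⟩)
  · have hp : p = (⊥, p.2) := Prod.ext h1 rfl
    rw [hp]; exact hL.2.2.1 p.2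
  · have hp : p = (p.1, ⊥) := Prod.ext rfl h1
    rw [hp]; exact hL.2.1 p.1
  · exact hL.1 (Prod.le_def.2 ⟨h1, h2⟩) h

lemma pureTensor_inter (a a' : X) (c c' : Y) :
    pureTensor a c ∩ pureTensor a' c' = pureTensor (a ⊓ a') (c ⊓ c') := by
  ext p
  constructor
  · rintro ⟨(h | ⟨h1, h2⟩), hp'⟩
    · exact Or.inl h
    · rcases hp' with h' | ⟨h1', h2'⟩
      · exact Or.inl h'
      · exact Or.inr ⟨le_inf h1 h1', le_inf h2 h2'⟩
  · rintro (h | ⟨h1, h2⟩)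
    · exact ⟨Or.inl h, Or.inl h⟩
    · exact ⟨Or.inr ⟨h1.trans inf_le_left, h2.trans inf_le_left⟩,
        Or.inr ⟨h1.trans inf_le_right, h2.trans inf_le_right⟩⟩

lemma isBiIdeal_union {a₀ a₁ : X} {c₀ c₁ : Y} (ha : a₁ ≤ a₀) (hc : c₀ ≤ c₁) :
    IsBiIdeal (pureTensor a₀ c₀ ∪ pureTensor a₁ c₁) := by
  refine ⟨?_, fun x => Or.inl (Or.inl (Or.inr rfl)),
    fun y => Or.inl (Or.inl (Or.inl rfl)), ?_, ?_⟩
  · rintro p q hqp (hp | hp)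
    · exact Or.inl ((isBiIdeal_pureTensor a₀ c₀).1 hqp hp)
    · exact Or.inr ((isBiIdeal_pureTensor a₁ c₁).1 hqp hp)
  · rintro x₀ x₁ c h0 h1
    simp only [Set.mem_union, mem_pureTensor_iff] at h0 h1 ⊢
    rcases h1 with ((h | h) | ⟨hx1, hc1⟩) | ((h | h) | ⟨hx1, hc1⟩)
    · subst h; simpa using h0
    · exact Or.inl (Or.inl (Or.inr h))
    · rcases h0 with ((h | h) | ⟨hx0, hc0⟩) | ((h | h) | ⟨hx0, hc0⟩)
      · subst h; exact Or.inl (Or.inr ⟨by simpa using hx1, hc1⟩)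
      · exact Or.inl (Or.inl (Or.inr h))
      · exact Or.inl (Or.inr ⟨sup_le hx0 hx1, hc0⟩)
      · subst h; exact Or.inl (Or.inr ⟨by simpa using hx1, hc1⟩)
      · exact Or.inl (Or.inl (Or.inr h))
      · exact Or.inl (Or.inr ⟨sup_le (hx0.trans ha) hx1, hc1⟩)
    · subst h; simpa using h0
    · exact Or.inl (Or.inl (Or.inr h))
    · rcases h0 with ((h | h) | ⟨hx0, hc0⟩) | ((h | h) | ⟨hx0, hc0⟩)
      · subst h; exact Or.inr (Or.inr ⟨by simpa using hx1, hc1⟩)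
      · exact Or.inl (Or.inl (Or.inr h))
      · exact Or.inl (Or.inr ⟨sup_le hx0 (hx1.trans ha), hc0⟩)
      · subst h; exact Or.inr (Or.inr ⟨by simpa using hx1, hc1⟩)
      · exact Or.inl (Or.inl (Or.inr h))
      · exact Or.inr (Or.inr ⟨sup_le hx0 hx1, hc1⟩)
  · rintro x c₀' c₁' h0 h1
    simp only [Set.mem_union, mem_pureTensor_iff] at h0 h1 ⊢
    rcases h1 with ((h | h) | ⟨hx1, hc1⟩) | ((h | h) | ⟨hx1, hc1⟩)
    · exact Or.inl (Or.inl (Or.inl h))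
    · subst h; simpa using h0
    · rcases h0 with ((h | h) | ⟨hx0, hc0⟩) | ((h | h) | ⟨hx0, hc0⟩)
      · exact Or.inl (Or.inl (Or.inl h))
      · subst h; exact Or.inl (Or.inr ⟨hx1, by simpa using hc1⟩)
      · exact Or.inl (Or.inr ⟨hx0, sup_le hc0 hc1⟩)
      · exact Or.inl (Or.inl (Or.inl h))
      · subst h; exact Or.inl (Or.inr ⟨hx1, by simpa using hc1⟩)
      · exact Or.inr (Or.inr ⟨hx0, sup_le hc0 (hc1.trans hc)⟩)
    · exact Or.inl (Or.inl (Or.inl h))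
    · subst h; simpa using h0
    · rcases h0 with ((h | h) | ⟨hx0, hc0⟩) | ((h | h) | ⟨hx0, hc0⟩)
      · exact Or.inl (Or.inl (Or.inl h))
      · subst h; exact Or.inr (Or.inr ⟨hx1, by simpa using hc1⟩)
      · exact Or.inr (Or.inr ⟨hx1, sup_le (hc0.trans hc) hc1⟩)
      · exact Or.inl (Or.inl (Or.inl h))
      · subst h; exact Or.inr (Or.inr ⟨hx1, by simpa using hc1⟩)
      · exact Or.inr (Or.inr ⟨hx0, sup_le hc0 hc1⟩)

lemma biSup_comparable {a₀ a₁ : X} {c₀ c₁ : Y} (ha : a₁ ≤ a₀) (hc : c₀ ≤ c₁) :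
    biSup (pureTensor a₀ c₀) (pureTensor a₁ c₁) = pureTensor a₀ c₀ ∪ pureTensor a₁ c₁ :=
  biGen_of_isBiIdeal (isBiIdeal_union ha hc)

lemma union_memC (hC : IsSubTensorProduct C) {a₀ a₁ : X} {c₀ c₁ : Y}
    (ha : a₁ ≤ a₀) (hc : c₀ ≤ c₁) :
    pureTensor a₀ c₀ ∪ pureTensor a₁ c₁ ∈ C := by
  have h := hC.2.2.1 a₀ a₁ c₀ c₁ (Or.inr ⟨ha, hc⟩)
  rwa [biSup_comparable ha hc] at h

lemma joinC_eq {I J K : Set (X × Y)} (hK : K ∈ C) (hIK : I ⊆ K) (hJK : J ⊆ K)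
    (hmin : ∀ L ∈ C, I ⊆ L → J ⊆ L → K ⊆ L) : joinC C I J = K :=
  subset_antisymm (Set.sInter_subset_of_mem ⟨hK, hIK, hJK⟩)
    (Set.subset_sInter fun L hL => hmin L hL.1 hL.2.1 hL.2.2)

end AuxLemmas

theorem isLatCong_of {L : Type*} [Lattice L] (α : L → L → Prop)
    (hrefl : ∀ x, α x x)
    (hiff : ∀ x y, α x y ↔ α (x ⊓ y) (x ⊔ y))
    (hchain : ∀ x y z, x ≤ y → y ≤ z → α x y → α y z → α x z)
    (hsup : ∀ x y t, x ≤ y → α x y → α (x ⊔ t) (y ⊔ t))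
    (hinf : ∀ x y t, x ≤ y → α x y → α (x ⊓ t) (y ⊓ t)) :
    IsLatCong α := by
  have hsymm : ∀ x y, α x y → α y x := by
    intro x y h
    have h' := (hiff x y).1 h
    rw [inf_comm, sup_comm] at h'
    exact (hiff y x).2 h'
  have hup : ∀ u w v : L, u ≤ w → w ≤ v → α u v → α w v := by
    intro u w v huw hwv h
    have h2 := hsup u v w (huw.trans hwv) h
    rwa [sup_eq_right.2 huw, sup_eq_left.2 hwv] at h2
  have hdown : ∀ u w v : L, u ≤ w → w ≤ v → α u v → α u w := by
    intro u w v huw hwv h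
    have h2 := hinf u v w (huw.trans hwv) h
    rwa [inf_eq_left.2 huw, inf_eq_right.2 hwv] at h2
  have htrans : ∀ x y z, α x y → α y z → α x z := by
    intro x y z h1 h2
    have a1 := (hiff x y).1 h1
    have a2 := (hiff y z).1 h2
    have hyzq : y ⊓ z ≤ (x ⊔ y) ⊓ (y ⊔ z) :=
      le_inf (inf_le_left.trans le_sup_right) inf_le_sup
    have hxyq : x ⊓ y ≤ (x ⊔ y) ⊓ (y ⊔ z) :=
      le_inf inf_le_sup (inf_le_right.trans le_sup_left)
    have hpxy : (x ⊓ y) ⊔ (y ⊓ z) ≤ x ⊔ y :=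
      sup_le inf_le_sup (inf_le_left.trans le_sup_right)
    have hpyz : (x ⊓ y) ⊔ (y ⊓ z) ≤ y ⊔ z :=
      sup_le (inf_le_right.trans le_sup_left) inf_le_sup
    have hp1 : α ((x ⊓ y) ⊔ (y ⊓ z)) (x ⊔ y) := by
      have h3 := hsup (x ⊓ y) (x ⊔ y) (y ⊓ z) inf_le_sup a1
      rwa [sup_eq_left.2 (inf_le_left.trans le_sup_right : y ⊓ z ≤ x ⊔ y)] at h3
    have hp2 : α ((x ⊓ y) ⊔ (y ⊓ z)) (y ⊔ z) := by
      have h3 := hsup (y ⊓ z) (y ⊔ z) (x ⊓ y) inf_le_sup a2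
      rwa [sup_comm (y ⊓ z) (x ⊓ y),
        sup_eq_left.2 (inf_le_right.trans le_sup_left : x ⊓ y ≤ y ⊔ z)] at h3
    have hq1 : α (x ⊓ y) ((x ⊔ y) ⊓ (y ⊔ z)) := by
      have h3 := hinf (x ⊓ y) (x ⊔ y) (y ⊔ z) inf_le_sup a1
      rwa [inf_eq_left.2 (inf_le_right.trans le_sup_left : x ⊓ y ≤ y ⊔ z)] at h3
    have hq2 : α (y ⊓ z) ((x ⊔ y) ⊓ (y ⊔ z)) := by
      have h3 := hinf (y ⊓ z) (y ⊔ z) (x ⊔ y) inf_le_sup a2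
      rwa [inf_eq_left.2 (inf_le_left.trans le_sup_right : y ⊓ z ≤ x ⊔ y),
        inf_comm (y ⊔ z) (x ⊔ y)] at h3
    have hm : α ((x ⊓ y) ⊓ (y ⊓ z)) (y ⊓ z) := by
      have h3 := hinf (x ⊓ y) ((x ⊔ y) ⊓ (y ⊔ z)) (y ⊓ z) hxyq hq1
      rwa [inf_eq_right.2 hyzq] at h3
    have hmq : α ((x ⊓ y) ⊓ (y ⊓ z)) ((x ⊔ y) ⊓ (y ⊔ z)) :=
      hchain _ _ _ inf_le_right hyzq hm hq2
    have hyzM : α (y ⊔ z) ((x ⊔ y) ⊔ (y ⊔ z)) := by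
      have h3 := hsup ((x ⊓ y) ⊔ (y ⊓ z)) (x ⊔ y) (y ⊔ z) hpxy hp1
      rwa [sup_eq_right.2 hpyz] at h3
    have hpM : α ((x ⊓ y) ⊔ (y ⊓ z)) ((x ⊔ y) ⊔ (y ⊔ z)) :=
      hchain _ _ _ hpyz le_sup_right hp2 hyzM
    have hqM : α ((x ⊔ y) ⊓ (y ⊔ z)) ((x ⊔ y) ⊔ (y ⊔ z)) := by
      have hpq : (x ⊓ y) ⊔ (y ⊓ z) ≤ (x ⊔ y) ⊓ (y ⊔ z) := sup_le hxyq hyzq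
      have h3 := hsup ((x ⊓ y) ⊔ (y ⊓ z)) ((x ⊔ y) ⊔ (y ⊔ z)) ((x ⊔ y) ⊓ (y ⊔ z))
        (hpyz.trans le_sup_right) hpM
      rwa [sup_eq_right.2 hpq,
        sup_eq_left.2 (inf_le_left.trans le_sup_left : (x ⊔ y) ⊓ (y ⊔ z) ≤ (x ⊔ y) ⊔ (y ⊔ z))] at h3
    have hmM : α ((x ⊓ y) ⊓ (y ⊓ z)) ((x ⊔ y) ⊔ (y ⊔ z)) :=
      hchain _ _ _ (inf_le_left.trans hxyq) (inf_le_left.trans le_sup_left) hmq hqM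
    have hxz1 : (x ⊓ y) ⊓ (y ⊓ z) ≤ x ⊓ z :=
      le_inf (inf_le_left.trans inf_le_left) (inf_le_right.trans inf_le_right)
    have hxz2 : x ⊔ z ≤ (x ⊔ y) ⊔ (y ⊔ z) :=
      sup_le (le_sup_left.trans le_sup_left) (le_sup_right.trans le_sup_right)
    have h3 : α (x ⊓ z) ((x ⊔ y) ⊔ (y ⊔ z)) :=
      hup _ _ _ hxz1 (inf_le_sup.trans hxz2) hmM
    exact (hiff x z).2 (hdown _ _ _ inf_le_sup hxz2 h3)
  have hsup1 : ∀ x x' y, α x x' → α (x ⊔ y) (x' ⊔ y) := by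
    intro x x' y h
    have a := (hiff x x').1 h
    have hb := hsup (x ⊓ x') (x ⊔ x') y inf_le_sup a
    have h1 : α (x ⊔ y) ((x ⊔ x') ⊔ y) :=
      hup _ _ _ (sup_le_sup_right inf_le_left y) (sup_le_sup_right le_sup_left y) hb
    have h2 : α (x' ⊔ y) ((x ⊔ x') ⊔ y) :=
      hup _ _ _ (sup_le_sup_right inf_le_right y) (sup_le_sup_right le_sup_right y) hb
    exact htrans _ _ _ h1 (hsymm _ _ h2)
  have hinf1 : ∀ x x' y, α x x' → α (x ⊓ y) (x' ⊓ y) := by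
    intro x x' y h
    have a := (hiff x x').1 h
    have hb := hinf (x ⊓ x') (x ⊔ x') y inf_le_sup a
    have h1 : α ((x ⊓ x') ⊓ y) (x ⊓ y) :=
      hdown _ _ _ (inf_le_inf_right y inf_le_left) (inf_le_inf_right y le_sup_left) hb
    have h2 : α ((x ⊓ x') ⊓ y) (x' ⊓ y) :=
      hdown _ _ _ (inf_le_inf_right y inf_le_right) (inf_le_inf_right y le_sup_right) hb
    exact htrans _ _ _ (hsymm _ _ h1) h2
  refine ⟨⟨hrefl, fun {x y} h => hsymm x y h, fun {x y z} h1 h2 => htrans x y z h1 h2⟩, ?_⟩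
  intro x x' y y' hx hy
  constructor
  · refine htrans _ _ _ (hsup1 x x' y hx) ?_
    have h2 := hsup1 y y' x' hy
    rwa [sup_comm y x', sup_comm y' x'] at h2
  · refine htrans _ _ _ (hinf1 x x' y hx) ?_
    have h2 := hinf1 y y' x' hy
    rwa [inf_comm y x', inf_comm y' x'] at h2

/-- The `⟨b, b′⟩`-projection of a congruence `γ` of `C` to `A` is a lattice
congruence of `A`. -/
theorem projection_isLatCong {A B : Type*} [Lattice A] [OrderBot A]
    [Lattice B] [OrderBot B] (C : Set (Set (A × B))) (hC : IsSubTensorProduct C)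
    (γ : Set (A × B) → Set (A × B) → Prop) (hγ : IsCongOn C γ)
    (b b' : B) (hbb : b ≤ b') :
    IsLatCong (fun x y : A =>
      γ (joinC C (pureTensor (x ⊔ y) b) (pureTensor (x ⊓ y) b'))
        (pureTensor (x ⊔ y) b')) := by
  obtain ⟨hγr, hγs, hγt, hγsub⟩ := hγ
  have hPt : ∀ (a : A) (c : B), pureTensor a c ∈ C := hC.2.1
  have hU : ∀ {s i : A}, i ≤ s → pureTensor s b ∪ pureTensor i b' ∈ C :=
    fun h => union_memC hC h hbb
  have hJ : ∀ {s i : A}, i ≤ s →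
      joinC C (pureTensor s b) (pureTensor i b') = pureTensor s b ∪ pureTensor i b' := by
    intro s i h
    exact joinC_eq (hU h) Set.subset_union_left Set.subset_union_right
      (fun L hL h1 h2 => Set.union_subset h1 h2)
  have hred : ∀ x y : A, x ≤ y →
      ((γ (joinC C (pureTensor (x ⊔ y) b) (pureTensor (x ⊓ y) b')) (pureTensor (x ⊔ y) b')) ↔
        γ (pureTensor y b ∪ pureTensor x b') (pureTensor y b')) := by
    intro x y h
    rw [sup_eq_right.2 h, inf_eq_left.2 h, hJ h]
  have hrefl : ∀ x : A,
      γ (joinC C (pureTensor (x ⊔ x) b) (pureTensor (x ⊓ x) b')) (pureTensor (x ⊔ x) b') := by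
    intro x
    rw [hred x x le_rfl, Set.union_eq_self_of_subset_left (pureTensor_mono le_rfl hbb)]
    exact hγr _ (hPt x b')
  have hiff : ∀ x y : A,
      (γ (joinC C (pureTensor (x ⊔ y) b) (pureTensor (x ⊓ y) b')) (pureTensor (x ⊔ y) b')) ↔
      (γ (joinC C (pureTensor ((x ⊓ y) ⊔ (x ⊔ y)) b) (pureTensor ((x ⊓ y) ⊓ (x ⊔ y)) b'))
        (pureTensor ((x ⊓ y) ⊔ (x ⊔ y)) b')) := by
    intro x y
    rw [sup_eq_right.2 (inf_le_sup : x ⊓ y ≤ x ⊔ y), inf_eq_left.2 (inf_le_sup : x ⊓ y ≤ x ⊔ y)]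
  have hchain : ∀ x y z : A, x ≤ y → y ≤ z →
      γ (joinC C (pureTensor (x ⊔ y) b) (pureTensor (x ⊓ y) b')) (pureTensor (x ⊔ y) b') →
      γ (joinC C (pureTensor (y ⊔ z) b) (pureTensor (y ⊓ z) b')) (pureTensor (y ⊔ z) b') →
      γ (joinC C (pureTensor (x ⊔ z) b) (pureTensor (x ⊓ z) b')) (pureTensor (x ⊔ z) b') := by
    intro x y z hxy hyz h1 h2
    rw [hred x y hxy] at h1
    rw [hred y z hyz] at h2
    rw [hred x z (hxy.trans hyz)]
    have hb1 : γ (joinC C (pureTensor y b ∪ pureTensor x b') (pureTensor z b))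
        (joinC C (pureTensor y b') (pureTensor z b)) :=
      (hγsub _ (hU hxy) _ (hPt y b') _ (hPt z b) _ (hPt z b) h1 (hγr _ (hPt z b))).2
    have e1 : joinC C (pureTensor y b ∪ pureTensor x b') (pureTensor z b)
        = pureTensor z b ∪ pureTensor x b' := by
      refine joinC_eq (hU (hxy.trans hyz)) ?_ Set.subset_union_left ?_
      · exact Set.union_subset ((pureTensor_mono hyz le_rfl).trans Set.subset_union_left)
          Set.subset_union_right
      · intro L hL hIL hJL
        exact Set.union_subset hJL (Set.subset_union_right.trans hIL)
    have e2 : joinC C (pureTensor y b') (pureTensor z b)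
        = pureTensor z b ∪ pureTensor y b' := by
      refine joinC_eq (hU hyz) Set.subset_union_right Set.subset_union_left ?_
      intro L hL hIL hJL
      exact Set.union_subset hJL hIL
    rw [e1, e2] at hb1
    exact hγt _ (hU (hxy.trans hyz)) _ (hU hyz) _ (hPt z b') hb1 h2
  have hsupc : ∀ x y t : A, x ≤ y →
      γ (joinC C (pureTensor (x ⊔ y) b) (pureTensor (x ⊓ y) b')) (pureTensor (x ⊔ y) b') →
      γ (joinC C (pureTensor ((x ⊔ t) ⊔ (y ⊔ t)) b) (pureTensor ((x ⊔ t) ⊓ (y ⊔ t)) b'))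
        (pureTensor ((x ⊔ t) ⊔ (y ⊔ t)) b') := by
    intro x y t hxy h1
    rw [hred x y hxy] at h1
    rw [hred _ _ (sup_le_sup_right hxy t)]
    have hD : pureTensor (y ⊔ t) b ∪ pureTensor (x ⊔ t) b' ∈ C :=
      hU (sup_le_sup_right hxy t)
    have hb1 := (hγsub _ (hU hxy) _ (hPt y b') _ hD _ hD h1 (hγr _ hD)).2
    have e1 : joinC C (pureTensor y b ∪ pureTensor x b')
        (pureTensor (y ⊔ t) b ∪ pureTensor (x ⊔ t) b')
        = pureTensor (y ⊔ t) b ∪ pureTensor (x ⊔ t) b' := by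
      refine joinC_eq hD ?_ subset_rfl (fun L hL hIL hJL => hJL)
      exact Set.union_subset
        ((pureTensor_mono le_sup_left le_rfl).trans Set.subset_union_left)
        ((pureTensor_mono le_sup_left le_rfl).trans Set.subset_union_right)
    have e2 : joinC C (pureTensor y b')
        (pureTensor (y ⊔ t) b ∪ pureTensor (x ⊔ t) b')
        = pureTensor (y ⊔ t) b' := by
      refine joinC_eq (hPt _ _) (pureTensor_mono le_sup_left le_rfl) ?_ ?_
      · exact Set.union_subset (pureTensor_mono le_rfl hbb)
          (pureTensor_mono (sup_le_sup_right hxy t) le_rfl)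
      · intro L hL hyL hDL
        have hbi := isBiIdeal_of_mem hC hL
        have m1 : (y, b') ∈ L := hyL (self_mem_pureTensor y b')
        have m2 : (x ⊔ t, b') ∈ L :=
          hDL (Set.mem_union_right _ (self_mem_pureTensor (x ⊔ t) b'))
        have m3 : (y ⊔ (x ⊔ t), b') ∈ L := hbi.2.2.2.1 _ _ _ m1 m2
        have hy : y ⊔ (x ⊔ t) = y ⊔ t := by rw [← sup_assoc, sup_eq_left.2 hxy]
        rw [hy] at m3
        exact pureTensor_subset hbi m3
    rw [e1, e2] at hb1
    exact hb1
  have hinfc : ∀ x y t : A, x ≤ y →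
      γ (joinC C (pureTensor (x ⊔ y) b) (pureTensor (x ⊓ y) b')) (pureTensor (x ⊔ y) b') →
      γ (joinC C (pureTensor ((x ⊓ t) ⊔ (y ⊓ t)) b) (pureTensor ((x ⊓ t) ⊓ (y ⊓ t)) b'))
        (pureTensor ((x ⊓ t) ⊔ (y ⊓ t)) b') := by
    intro x y t hxy h1
    rw [hred x y hxy] at h1
    rw [hred _ _ (inf_le_inf_right t hxy)]
    have hb1 := (hγsub _ (hU hxy) _ (hPt y b') _ (hPt (y ⊓ t) b') _ (hPt (y ⊓ t) b') h1
      (hγr _ (hPt (y ⊓ t) b'))).1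
    have e2 : pureTensor y b' ∩ pureTensor (y ⊓ t) b' = pureTensor (y ⊓ t) b' := by
      rw [pureTensor_inter, ← inf_assoc, inf_idem, inf_idem]
    have e1 : (pureTensor y b ∪ pureTensor x b') ∩ pureTensor (y ⊓ t) b'
        = pureTensor (y ⊓ t) b ∪ pureTensor (x ⊓ t) b' := by
      rw [Set.union_inter_distrib_right, pureTensor_inter, pureTensor_inter,
        ← inf_assoc, inf_idem, inf_eq_left.2 hbb, ← inf_assoc, inf_eq_left.2 hxy, inf_idem]
    rw [e1, e2] at hb1
    exact hb1
  refine isLatCong_of _ hrefl hiff ?_ ?_ ?_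
  · exact hchain
  · exact hsupc
  · exact hinfc
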